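/- Let Ts, δc, L̄1, L̄2, α1, α2, M1, M2, L1, L2, B1, B2 be positive reals and fix R21 ≥ 0 and R23 ≥ 0. Define G : [0, ∞) → ℝ by G(R) = (L̄1/(Ts + δc·R))·( (2^R − 1)/α1 + 2^R·(2^{R21} − 1)/α2 ) + (1/(Ts + δc·R23))·( L̄2 − ((Ts + δc·R21)/(Ts + δc·R))·L̄1 )·(2^{R23} − 1)/α2 + (M1/L1²)·( B1 − L̄1·R/(Ts + δc·R) )³ + (M2/L2²)·( B2 − ( L̄2·R23·(Ts + δc·R) + L̄1·Ts·(R21 − R23) ) / ( (Ts + δc·R)·(Ts + δc·R23) ) )³. Then G is quasiconvex on every convex subset I of [0, ∞) on which both cube arguments, B1 − L̄1·R/(Ts + δc·R) and B2 − ( L̄2·R23·(Ts + δc·R) + L̄1·Ts·(R21 − R23) ) / ( (Ts + δc·R)·(Ts + δc·R23) ), are nonnegative for all R ∈ I. (Appendix F: the partial-offloading objective is quasiconvex in R11 when R21 and R23 are fixed.) -/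

import Mathlib

set_option maxHeartbeats 1000000

/-- The partial-offloading objective (Case α1 ≤ α2) as a function of user 1's first-slot
rate R = R11, with R21 and R23 fixed. -/
noncomputable def G (Ts δc Lb1 Lb2 α1 α2 M1 M2 L1 L2 B1 B2 R21 R23 R : ℝ) : ℝ :=
  (Lb1 / (Ts + δc * R)) *
      (((2 : ℝ) ^ R - 1) / α1 + (2 : ℝ) ^ R * ((2 : ℝ) ^ R21 - 1) / α2) +
    (1 / (Ts + δc * R23)) * (Lb2 - ((Ts + δc * R21) / (Ts + δc * R)) * Lb1) *
      (((2 : ℝ) ^ R23 - 1) / α2) +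
    (M1 / L1 ^ 2) * (B1 - Lb1 * R / (Ts + δc * R)) ^ 3 +
    (M2 / L2 ^ 2) * (B2 - (Lb2 * R23 * (Ts + δc * R) + Lb1 * Ts * (R21 - R23)) /
      ((Ts + δc * R) * (Ts + δc * R23))) ^ 3

/-- `Hfun = (Ts + δc t)² · G'(t)`. -/
noncomputable def Hfun (Ts δc Lb1 Lb2 α1 α2 M1 M2 L1 L2 B1 B2 R21 R23 t : ℝ) : ℝ :=
  Lb1 * (Real.log 2 * (2 : ℝ) ^ t * (1 / α1 + ((2 : ℝ) ^ R21 - 1) / α2) * (Ts + δc * t)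
        - δc * (((2 : ℝ) ^ t - 1) / α1 + (2 : ℝ) ^ t * ((2 : ℝ) ^ R21 - 1) / α2))
  + ((Ts + δc * R21) * Lb1 * (((2 : ℝ) ^ R23 - 1) / α2) / (Ts + δc * R23)) * δc
  - 3 * (M1 / L1 ^ 2) * (B1 - Lb1 * t / (Ts + δc * t)) ^ 2 * (Lb1 * Ts)
  + 3 * (M2 / L2 ^ 2) * (B2 - (Lb2 * R23 * (Ts + δc * t) + Lb1 * Ts * (R21 - R23)) /
      ((Ts + δc * t) * (Ts + δc * R23))) ^ 2 * (δc * (Lb1 * Ts * (R21 - R23) / (Ts + δc * R23)))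

/-- The derivative of `Hfun`. -/
noncomputable def Hfun' (Ts δc Lb1 Lb2 α1 α2 M1 M2 L1 L2 B1 B2 R21 R23 t : ℝ) : ℝ :=
  Lb1 * ((Real.log 2) ^ 2 * (2 : ℝ) ^ t * (1 / α1 + ((2 : ℝ) ^ R21 - 1) / α2) * (Ts + δc * t))
  + 6 * (M1 / L1 ^ 2) * (B1 - Lb1 * t / (Ts + δc * t)) * (Lb1 * Ts) ^ 2 / (Ts + δc * t) ^ 2
  + 6 * (M2 / L2 ^ 2) * (B2 - (Lb2 * R23 * (Ts + δc * t) + Lb1 * Ts * (R21 - R23)) /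
      ((Ts + δc * t) * (Ts + δc * R23)))
      * (δc * (Lb1 * Ts * (R21 - R23) / (Ts + δc * R23))) ^ 2 / (Ts + δc * t) ^ 2

lemma G_hasDerivAt (Ts δc Lb1 Lb2 α1 α2 M1 M2 L1 L2 B1 B2 R21 R23 t : ℝ)
    (hα1 : α1 ≠ 0) (hα2 : α2 ≠ 0) (hL1 : L1 ≠ 0) (hL2 : L2 ≠ 0)
    (hs : Ts + δc * t ≠ 0) (hs23 : Ts + δc * R23 ≠ 0) :
    HasDerivAt (fun R => G Ts δc Lb1 Lb2 α1 α2 M1 M2 L1 L2 B1 B2 R21 R23 R)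
      (Hfun Ts δc Lb1 Lb2 α1 α2 M1 M2 L1 L2 B1 B2 R21 R23 t / (Ts + δc * t) ^ 2) t := by
  have d1 : HasDerivAt (fun R : ℝ => Ts + δc * R) δc t := by
    simpa using ((hasDerivAt_id t).const_mul δc).const_add Ts
  have du : HasDerivAt (fun R : ℝ => (2 : ℝ) ^ R) ((2 : ℝ) ^ t * Real.log 2) t :=
    (Real.hasStrictDerivAt_const_rpow (by norm_num) t).hasDerivAt
  have h1 := ((hasDerivAt_const t Lb1).div d1 hs).mul
    (((du.sub_const 1).div_const α1).add ((du.mul_const ((2 : ℝ) ^ R21 - 1)).div_const α2))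
  have h2 := (((((hasDerivAt_const t (Ts + δc * R21)).div d1 hs).mul_const Lb1).const_sub
    Lb2).const_mul (1 / (Ts + δc * R23))).mul_const (((2 : ℝ) ^ R23 - 1) / α2)
  have h3 := (((((hasDerivAt_id t).const_mul Lb1).div d1 hs).const_sub B1).pow 3).const_mul
    (M1 / L1 ^ 2)
  have h4 := (((((d1.const_mul (Lb2 * R23)).add_const (Lb1 * Ts * (R21 - R23))).div
    (d1.mul_const (Ts + δc * R23)) (mul_ne_zero hs hs23)).const_sub B2).pow 3).const_mul
    (M2 / L2 ^ 2)
  have e1 : HasDerivAt (fun R => (Lb1 / (Ts + δc * R)) *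
      (((2 : ℝ) ^ R - 1) / α1 + (2 : ℝ) ^ R * ((2 : ℝ) ^ R21 - 1) / α2))
      (Lb1 * (Real.log 2 * (2 : ℝ) ^ t * (1 / α1 + ((2 : ℝ) ^ R21 - 1) / α2) * (Ts + δc * t)
        - δc * (((2 : ℝ) ^ t - 1) / α1 + (2 : ℝ) ^ t * ((2 : ℝ) ^ R21 - 1) / α2))
        / (Ts + δc * t) ^ 2) t := by
    refine h1.congr_deriv ?_
    simp only [Pi.div_apply, Pi.add_apply]
    field_simp
    ring
  have e2 : HasDerivAt (fun R => (1 / (Ts + δc * R23)) *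
      (Lb2 - ((Ts + δc * R21) / (Ts + δc * R)) * Lb1) * (((2 : ℝ) ^ R23 - 1) / α2))
      (((Ts + δc * R21) * Lb1 * (((2 : ℝ) ^ R23 - 1) / α2) / (Ts + δc * R23)) * δc
        / (Ts + δc * t) ^ 2) t := by
    refine h2.congr_deriv ?_
    field_simp
    ring
  have e3 : HasDerivAt (fun R => (M1 / L1 ^ 2) * (B1 - Lb1 * R / (Ts + δc * R)) ^ 3)
      (-(3 * (M1 / L1 ^ 2) * (B1 - Lb1 * t / (Ts + δc * t)) ^ 2 * (Lb1 * Ts))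
        / (Ts + δc * t) ^ 2) t := by
    refine h3.congr_deriv ?_
    simp only [id_eq]
    norm_num
    set F := B1 - Lb1 * t / (Ts + δc * t) with hF
    field_simp
    ring
  have e4 : HasDerivAt (fun R => (M2 / L2 ^ 2) *
      (B2 - (Lb2 * R23 * (Ts + δc * R) + Lb1 * Ts * (R21 - R23)) /
        ((Ts + δc * R) * (Ts + δc * R23))) ^ 3)
      (3 * (M2 / L2 ^ 2) * (B2 - (Lb2 * R23 * (Ts + δc * t) + Lb1 * Ts * (R21 - R23)) /
        ((Ts + δc * t) * (Ts + δc * R23))) ^ 2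
        * (δc * (Lb1 * Ts * (R21 - R23) / (Ts + δc * R23))) / (Ts + δc * t) ^ 2) t := by
    refine h4.congr_deriv ?_
    norm_num
    set F := B2 - (Lb2 * R23 * (Ts + δc * t) + Lb1 * Ts * (R21 - R23)) /
      ((Ts + δc * t) * (Ts + δc * R23)) with hF
    field_simp
    ring
  have hall := ((e1.add e2).add e3).add e4
  unfold G Hfun
  refine hall.congr_deriv ?_
  set F1 := B1 - Lb1 * t / (Ts + δc * t) with hF1
  set F2 := B2 - (Lb2 * R23 * (Ts + δc * t) + Lb1 * Ts * (R21 - R23)) /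
    ((Ts + δc * t) * (Ts + δc * R23)) with hF2
  field_simp
  ring

lemma Hfun_hasDerivAt (Ts δc Lb1 Lb2 α1 α2 M1 M2 L1 L2 B1 B2 R21 R23 t : ℝ)
    (hα1 : α1 ≠ 0) (hα2 : α2 ≠ 0) (hL1 : L1 ≠ 0) (hL2 : L2 ≠ 0)
    (hs : Ts + δc * t ≠ 0) (hs23 : Ts + δc * R23 ≠ 0) :
    HasDerivAt (fun R => Hfun Ts δc Lb1 Lb2 α1 α2 M1 M2 L1 L2 B1 B2 R21 R23 R)
      (Hfun' Ts δc Lb1 Lb2 α1 α2 M1 M2 L1 L2 B1 B2 R21 R23 t) t := by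
  have d1 : HasDerivAt (fun R : ℝ => Ts + δc * R) δc t := by
    simpa using ((hasDerivAt_id t).const_mul δc).const_add Ts
  have du : HasDerivAt (fun R : ℝ => (2 : ℝ) ^ R) ((2 : ℝ) ^ t * Real.log 2) t :=
    (Real.hasStrictDerivAt_const_rpow (by norm_num) t).hasDerivAt
  have hA := ((du.const_mul (Real.log 2)).mul_const
    (1 / α1 + ((2 : ℝ) ^ R21 - 1) / α2)).mul d1
  have hV := (((du.sub_const 1).div_const α1).add
    ((du.mul_const ((2 : ℝ) ^ R21 - 1)).div_const α2)).const_mul δc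
  have hF1 := (((hasDerivAt_id t).const_mul Lb1).div d1 hs).const_sub B1
  have hF2 := (((d1.const_mul (Lb2 * R23)).add_const (Lb1 * Ts * (R21 - R23))).div
    (d1.mul_const (Ts + δc * R23)) (mul_ne_zero hs hs23)).const_sub B2
  have hT3 := ((hF1.pow 2).const_mul (3 * (M1 / L1 ^ 2))).mul_const (Lb1 * Ts)
  have hT4 := ((hF2.pow 2).const_mul (3 * (M2 / L2 ^ 2))).mul_const
    (δc * (Lb1 * Ts * (R21 - R23) / (Ts + δc * R23)))
  have hall := (((((hA.sub hV).const_mul Lb1).add_const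
    (((Ts + δc * R21) * Lb1 * (((2 : ℝ) ^ R23 - 1) / α2) / (Ts + δc * R23)) * δc)).sub
    hT3).add hT4)
  unfold Hfun Hfun'
  refine hall.congr_deriv ?_
  push_cast
  simp only [Pi.div_apply, Pi.add_apply, Pi.mul_apply, Pi.sub_apply, id]
  field_simp
  ring

/-- If `f` has derivative `ψ` on `[x,y]`, and the sign of `ψ` matches the sign of a
function `H` that is monotone on `[x,y]`, then `f z ≤ max (f x) (f y)` for `z ∈ [x,y]`. -/
lemma unimodal_aux {f H ψ : ℝ → ℝ} {x y z : ℝ} (hz : z ∈ Set.Icc x y)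
    (hf : ∀ t ∈ Set.Icc x y, HasDerivAt f (ψ t) t)
    (hH : MonotoneOn H (Set.Icc x y))
    (hsign : ∀ t ∈ Set.Icc x y, (ψ t ≤ 0 ↔ H t ≤ 0) ∧ (0 ≤ ψ t ↔ 0 ≤ H t)) :
    f z ≤ max (f x) (f y) := by
  have hzx : x ≤ z := hz.1
  have hzy : z ≤ y := hz.2
  rcases le_total (H z) 0 with h | h
  · have hsub : Set.Icc x z ⊆ Set.Icc x y := Set.Icc_subset_Icc_right hzy
    have hanti : AntitoneOn f (Set.Icc x z) := by
      apply antitoneOn_of_deriv_nonpos (convex_Icc x z)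
      · exact fun t ht => (hf t (hsub ht)).continuousAt.continuousWithinAt
      · intro t ht
        rw [interior_Icc] at ht
        exact (hf t (hsub (Set.Ioo_subset_Icc_self ht))).differentiableAt.differentiableWithinAt
      · intro t ht
        rw [interior_Icc] at ht
        have ht' : t ∈ Set.Icc x y := hsub (Set.Ioo_subset_Icc_self ht)
        rw [(hf t ht').deriv]
        exact ((hsign t ht').1).mpr (le_trans (hH ht' hz ht.2.le) h)
    exact le_max_of_le_left (hanti ⟨le_refl x, hzx⟩ ⟨hzx, le_refl z⟩ hzx)
  · have hsub : Set.Icc z y ⊆ Set.Icc x y := Set.Icc_subset_Icc_left hzx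
    have hmono : MonotoneOn f (Set.Icc z y) := by
      apply monotoneOn_of_deriv_nonneg (convex_Icc z y)
      · exact fun t ht => (hf t (hsub ht)).continuousAt.continuousWithinAt
      · intro t ht
        rw [interior_Icc] at ht
        exact (hf t (hsub (Set.Ioo_subset_Icc_self ht))).differentiableAt.differentiableWithinAt
      · intro t ht
        rw [interior_Icc] at ht
        have ht' : t ∈ Set.Icc x y := hsub (Set.Ioo_subset_Icc_self ht)
        rw [(hf t ht').deriv]
        exact ((hsign t ht').2).mpr (le_trans h (hH hz ht' ht.1.le))
    exact le_max_of_le_right (hmono ⟨le_refl z, hzy⟩ ⟨hzy, le_refl y⟩ hzy)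

lemma sign_div_sq {A s : ℝ} (hs : s ≠ 0) :
    (A / s ^ 2 ≤ 0 ↔ A ≤ 0) ∧ (0 ≤ A / s ^ 2 ↔ 0 ≤ A) := by
  have h : (0 : ℝ) < s ^ 2 := by positivity
  constructor
  · rw [div_le_iff₀ h, zero_mul]
  · rw [le_div_iff₀ h, zero_mul]

/-- Appendix F: the partial-offloading objective is quasiconvex in R11 when R21 and R23 are
fixed, on any convex subset of [0, ∞) where both cube arguments are nonnegative. -/
theorem partial_objective_quasiconvex
    (Ts δc Lb1 Lb2 α1 α2 M1 M2 L1 L2 B1 B2 R21 R23 : ℝ)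
    (hTs : 0 < Ts) (hδc : 0 < δc) (hLb1 : 0 < Lb1) (hLb2 : 0 < Lb2)
    (hα1 : 0 < α1) (hα2 : 0 < α2) (hM1 : 0 < M1) (hM2 : 0 < M2)
    (hL1 : 0 < L1) (hL2 : 0 < L2) (hB1 : 0 < B1) (hB2 : 0 < B2)
    (hR21 : 0 ≤ R21) (hR23 : 0 ≤ R23) :
    ∀ I : Set ℝ, I ⊆ Set.Ici (0 : ℝ) → Convex ℝ I →
      (∀ R ∈ I,
        0 ≤ B1 - Lb1 * R / (Ts + δc * R) ∧
        0 ≤ B2 - (Lb2 * R23 * (Ts + δc * R) + Lb1 * Ts * (R21 - R23)) /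
          ((Ts + δc * R) * (Ts + δc * R23))) →
      QuasiconvexOn ℝ I (fun R => G Ts δc Lb1 Lb2 α1 α2 M1 M2 L1 L2 B1 B2 R21 R23 R) := by
  intro I hI0 hIconv hcube
  have hspos : ∀ t : ℝ, 0 ≤ t → 0 < Ts + δc * t := fun t ht => by positivity
  have hs23 : Ts + δc * R23 ≠ 0 := by positivity
  have hfd : ∀ t : ℝ, 0 ≤ t →
      HasDerivAt (fun R => G Ts δc Lb1 Lb2 α1 α2 M1 M2 L1 L2 B1 B2 R21 R23 R)
        (Hfun Ts δc Lb1 Lb2 α1 α2 M1 M2 L1 L2 B1 B2 R21 R23 t / (Ts + δc * t) ^ 2) t :=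
    fun t ht => G_hasDerivAt Ts δc Lb1 Lb2 α1 α2 M1 M2 L1 L2 B1 B2 R21 R23 t
      hα1.ne' hα2.ne' hL1.ne' hL2.ne' (hspos t ht).ne' hs23
  have hHd : ∀ t : ℝ, 0 ≤ t →
      HasDerivAt (fun R => Hfun Ts δc Lb1 Lb2 α1 α2 M1 M2 L1 L2 B1 B2 R21 R23 R)
        (Hfun' Ts δc Lb1 Lb2 α1 α2 M1 M2 L1 L2 B1 B2 R21 R23 t) t :=
    fun t ht => Hfun_hasDerivAt Ts δc Lb1 Lb2 α1 α2 M1 M2 L1 L2 B1 B2 R21 R23 t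
      hα1.ne' hα2.ne' hL1.ne' hL2.ne' (hspos t ht).ne' hs23
  have hH'nonneg : ∀ t ∈ I, 0 ≤ Hfun' Ts δc Lb1 Lb2 α1 α2 M1 M2 L1 L2 B1 B2 R21 R23 t := by
    intro t ht
    obtain ⟨h1, h2⟩ := hcube t ht
    have ht0 : (0 : ℝ) ≤ t := hI0 ht
    have hst : 0 < Ts + δc * t := hspos t ht0
    have h2t : (0 : ℝ) < (2 : ℝ) ^ t := Real.rpow_pos_of_pos two_pos t
    have hq : (1 : ℝ) ≤ (2 : ℝ) ^ R21 := Real.one_le_rpow one_le_two hR21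
    have hcoef : 0 ≤ 1 / α1 + ((2 : ℝ) ^ R21 - 1) / α2 :=
      add_nonneg (by positivity) (div_nonneg (by linarith) hα2.le)
    unfold Hfun'
    have e1 : 0 ≤ Lb1 * ((Real.log 2) ^ 2 * (2 : ℝ) ^ t *
        (1 / α1 + ((2 : ℝ) ^ R21 - 1) / α2) * (Ts + δc * t)) :=
      mul_nonneg hLb1.le
        (mul_nonneg (mul_nonneg (mul_nonneg (sq_nonneg _) h2t.le) hcoef) hst.le)
    have e2 : 0 ≤ 6 * (M1 / L1 ^ 2) * (B1 - Lb1 * t / (Ts + δc * t)) * (Lb1 * Ts) ^ 2 /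
        (Ts + δc * t) ^ 2 :=
      div_nonneg (mul_nonneg (mul_nonneg (by positivity) h1) (sq_nonneg _)) (sq_nonneg _)
    have e3 : 0 ≤ 6 * (M2 / L2 ^ 2) *
        (B2 - (Lb2 * R23 * (Ts + δc * t) + Lb1 * Ts * (R21 - R23)) /
          ((Ts + δc * t) * (Ts + δc * R23))) *
        (δc * (Lb1 * Ts * (R21 - R23) / (Ts + δc * R23))) ^ 2 / (Ts + δc * t) ^ 2 :=
      div_nonneg (mul_nonneg (mul_nonneg (by positivity) h2) (sq_nonneg _)) (sq_nonneg _)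
    linarith
  have hmono : ∀ x ∈ I, ∀ y ∈ I, x ≤ y →
      MonotoneOn (fun R => Hfun Ts δc Lb1 Lb2 α1 α2 M1 M2 L1 L2 B1 B2 R21 R23 R)
        (Set.Icc x y) := by
    intro x hx y hy hxy
    have hsub : Set.Icc x y ⊆ I := hIconv.ordConnected.out hx hy
    apply monotoneOn_of_deriv_nonneg (convex_Icc x y)
    · exact fun t ht => (hHd t (hI0 (hsub ht))).continuousAt.continuousWithinAt
    · intro t ht
      rw [interior_Icc] at ht
      exact (hHd t (hI0 (hsub
        (Set.Ioo_subset_Icc_self ht)))).differentiableAt.differentiableWithinAt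
    · intro t ht
      rw [interior_Icc] at ht
      have ht' := hsub (Set.Ioo_subset_Icc_self ht)
      rw [(hHd t (hI0 ht')).deriv]
      exact hH'nonneg t ht'
  have hsign : ∀ t : ℝ, 0 ≤ t →
      ((Hfun Ts δc Lb1 Lb2 α1 α2 M1 M2 L1 L2 B1 B2 R21 R23 t / (Ts + δc * t) ^ 2 ≤ 0 ↔
        Hfun Ts δc Lb1 Lb2 α1 α2 M1 M2 L1 L2 B1 B2 R21 R23 t ≤ 0) ∧
       (0 ≤ Hfun Ts δc Lb1 Lb2 α1 α2 M1 M2 L1 L2 B1 B2 R21 R23 t / (Ts + δc * t) ^ 2 ↔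
        0 ≤ Hfun Ts δc Lb1 Lb2 α1 α2 M1 M2 L1 L2 B1 B2 R21 R23 t)) :=
    fun t ht => sign_div_sq (hspos t ht).ne'
  rw [quasiconvexOn_iff_le_max]
  refine ⟨hIconv, fun x hx y hy a b ha hb hab => ?_⟩
  simp only [smul_eq_mul]
  rcases le_total x y with hxy | hxy
  · have hsub : Set.Icc x y ⊆ I := hIconv.ordConnected.out hx hy
    have hz : a * x + b * y ∈ Set.Icc x y := by
      rw [← segment_eq_Icc hxy]
      exact ⟨a, b, ha, hb, hab, rfl⟩
    exact unimodal_aux hz (fun t ht => hfd t (hI0 (hsub ht))) (hmono x hx y hy hxy)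
      (fun t ht => hsign t (hI0 (hsub ht)))
  · have hsub : Set.Icc y x ⊆ I := hIconv.ordConnected.out hy hx
    have hz : a * x + b * y ∈ Set.Icc y x := by
      rw [← segment_eq_Icc hxy]
      exact ⟨b, a, hb, ha, by linarith, by rw [smul_eq_mul, smul_eq_mul]; ring⟩
    rw [max_comm]
    exact unimodal_aux hz (fun t ht => hfd t (hI0 (hsub ht))) (hmono y hy x hx hxy)
      (fun t ht => hsign t (hI0 (hsub ht)))
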